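/- Let λ be a linear functional on Π(ℝ^d) vanishing on all polynomials of degree < k. Then (λ⊗λ)(‖x−y‖^(2k)) = 0 if and only if λ vanishes on all polynomials of degree ≤ k. -/

import Mathlib

open MvPolynomial Finset

noncomputable section

/-- The multi-index on the first (`x`) block of variables of a monomial in `Fin d ⊕ Fin d`. -/
def xpart {d : ℕ} (m : (Fin d ⊕ Fin d) →₀ ℕ) : Fin d →₀ ℕ :=
  Finsupp.equivFunOnFinite.symm fun i => m (Sum.inl i)

/-- The multi-index on the second (`y`) block of variables. -/
def ypart {d : ℕ} (m : (Fin d ⊕ Fin d) →₀ ℕ) : Fin d →₀ ℕ :=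
  Finsupp.equivFunOnFinite.symm fun i => m (Sum.inr i)

/-- `(l ⊗ m) f`: apply `l` in the `x`-variables and `m` in the `y`-variables of a
two-block polynomial `f`, via its canonical representation as a sum of products
of monomials in `x` and monomials in `y`. -/
def tensorApply {d : ℕ} (l m : Module.Dual ℝ (MvPolynomial (Fin d) ℝ))
    (f : MvPolynomial (Fin d ⊕ Fin d) ℝ) : ℝ :=
  ∑ mo ∈ f.support, f.coeff mo * l (monomial (xpart mo) 1) * m (monomial (ypart mo) 1)

/-- Apply the linear functional `l` in the second (`y`) block of variables,
yielding a polynomial in the first (`x`) block of variables. -/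
def applySecond {d : ℕ} (l : Module.Dual ℝ (MvPolynomial (Fin d) ℝ))
    (f : MvPolynomial (Fin d ⊕ Fin d) ℝ) : MvPolynomial (Fin d) ℝ :=
  ∑ mo ∈ f.support, monomial (xpart mo) (f.coeff mo * l (monomial (ypart mo) 1))

/-- The polynomial `(x,y) ↦ ‖x-y‖^(2k)` in the `2d` variables `x(1),…,x(d),y(1),…,y(d)`. -/
def distPoly (d k : ℕ) : MvPolynomial (Fin d ⊕ Fin d) ℝ :=
  (∑ i : Fin d, (X (Sum.inl i) - X (Sum.inr i)) ^ 2) ^ k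

/-- `l` vanishes on all polynomials of total degree `< k` (i.e. `l ⊥ Π_{<k}`). -/
def VanishesLT {d : ℕ} (l : Module.Dual ℝ (MvPolynomial (Fin d) ℝ)) (k : ℕ) : Prop :=
  ∀ p : MvPolynomial (Fin d) ℝ, p.totalDegree < k → l p = 0

/-- `l` vanishes on all polynomials of total degree `≤ k` (i.e. `l ⊥ Π_{≤k}`). -/
def VanishesLE {d : ℕ} (l : Module.Dual ℝ (MvPolynomial (Fin d) ℝ)) (k : ℕ) : Prop :=
  ∀ p : MvPolynomial (Fin d) ℝ, p.totalDegree ≤ k → l p = 0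

/-- `p_{a,β} : x ↦ ‖x‖^(2a) x^β` as a polynomial. -/
def pPoly (d : ℕ) (a : ℕ) (β : Fin d →₀ ℕ) : MvPolynomial (Fin d) ℝ :=
  (∑ i : Fin d, X i ^ 2) ^ a * monomial β 1

/-! ### Auxiliary machinery -/

/-- `tensorApply` as a linear map. -/
def tLin {d : ℕ} (l m : Module.Dual ℝ (MvPolynomial (Fin d) ℝ)) :
    MvPolynomial (Fin d ⊕ Fin d) ℝ →ₗ[ℝ] ℝ :=
  (Finsupp.lsum ℝ fun mo =>
    LinearMap.toSpanSingleton ℝ ℝ (l (monomial (xpart mo) 1) * m (monomial (ypart mo) 1)))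
      ∘ₗ (AddMonoidAlgebra.coeffLinearEquiv ℝ).toLinearMap

lemma tensorApply_eq {d : ℕ} (l m : Module.Dual ℝ (MvPolynomial (Fin d) ℝ))
    (f : MvPolynomial (Fin d ⊕ Fin d) ℝ) : tensorApply l m f = tLin l m f := by
  rw [tensorApply, tLin]
  erw [LinearMap.comp_apply, Finsupp.lsum_apply (S := ℝ)]
  rw [Finsupp.sum]
  exact Finset.sum_congr rfl fun mo _ => by
    change _ = MvPolynomial.coeff mo f • (l (monomial (xpart mo) 1) * m (monomial (ypart mo) 1))
    simp only [LinearMap.toSpanSingleton_apply, smul_eq_mul, MvPolynomial.coeff]; ring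

lemma tensorApply_monomial {d : ℕ} (l m : Module.Dual ℝ (MvPolynomial (Fin d) ℝ))
    (n : (Fin d ⊕ Fin d) →₀ ℕ) (c : ℝ) :
    tensorApply l m (monomial n c) =
      c * l (monomial (xpart n) 1) * m (monomial (ypart n) 1) := by
  rw [tensorApply_eq, tLin, LinearMap.comp_apply]
  have hs : (AddMonoidAlgebra.coeffLinearEquiv ℝ).toLinearMap (monomial n c : MvPolynomial (Fin d ⊕ Fin d) ℝ)
      = Finsupp.single n c := rfl
  erw [hs, Finsupp.lsum_single (S := ℝ)]
  rw [LinearMap.toSpanSingleton_apply, smul_eq_mul]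
  ring

lemma xpart_mapDomain {d : ℕ} (α β : Fin d →₀ ℕ) :
    xpart (Finsupp.mapDomain Sum.inl α + Finsupp.mapDomain Sum.inr β) = α := by
  ext i
  simp [xpart, Finsupp.mapDomain_apply Sum.inl_injective,
    Finsupp.mapDomain_notin_range (f := (Sum.inr : Fin d → Fin d ⊕ Fin d)) β (Sum.inl i) (by simp)]

lemma ypart_mapDomain {d : ℕ} (α β : Fin d →₀ ℕ) :
    ypart (Finsupp.mapDomain Sum.inl α + Finsupp.mapDomain Sum.inr β) = β := by
  ext i
  simp [ypart, Finsupp.mapDomain_apply Sum.inr_injective,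
    Finsupp.mapDomain_notin_range (f := (Sum.inl : Fin d → Fin d ⊕ Fin d)) α (Sum.inr i) (by simp)]

lemma tensorApply_mul {d : ℕ} (l m : Module.Dual ℝ (MvPolynomial (Fin d) ℝ))
    (p q : MvPolynomial (Fin d) ℝ) :
    tensorApply l m (rename Sum.inl p * rename Sum.inr q) = l p * m q := by
  induction p using MvPolynomial.induction_on' with
  | add p1 p2 h1 h2 =>
      rw [map_add, add_mul, tensorApply_eq, map_add, ← tensorApply_eq, ← tensorApply_eq,
        h1, h2, map_add, add_mul]
  | monomial α a =>
      induction q using MvPolynomial.induction_on' with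
      | add q1 q2 h1 h2 =>
          rw [map_add, mul_add, tensorApply_eq, map_add, ← tensorApply_eq, ← tensorApply_eq,
            h1, h2, map_add, mul_add]
      | monomial β b =>
          rw [rename_monomial, rename_monomial, monomial_mul, tensorApply_monomial,
            xpart_mapDomain, ypart_mapDomain]
          have ha : (monomial α a : MvPolynomial (Fin d) ℝ) = a • monomial α 1 := by
            rw [smul_monomial, smul_eq_mul, mul_one]
          have hb : (monomial β b : MvPolynomial (Fin d) ℝ) = b • monomial β 1 := by
            rw [smul_monomial, smul_eq_mul, mul_one]
          rw [ha, hb, map_smul, map_smul, smul_eq_mul, smul_eq_mul]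
          ring

lemma monomial_one_prod {d : ℕ} (β : Fin d → ℕ) :
    (monomial (Finsupp.equivFunOnFinite.symm β) (1:ℝ) : MvPolynomial (Fin d) ℝ)
      = ∏ i, X i ^ β i := by
  rw [monomial_eq, C_1, one_mul, Finsupp.prod_pow]
  simp

lemma distPoly_expand (d k : ℕ) :
    distPoly d k =
      ∑ b ∈ range (k+1), ∑ a ∈ range (k - b + 1),
        ∑ β ∈ piAntidiag (univ : Finset (Fin d)) b,
          ((-2:ℝ)^b * (k.choose b) * ((k-b).choose a) * (Nat.multinomial univ β)) •
            (rename Sum.inl (pPoly d a (Finsupp.equivFunOnFinite.symm β)) *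
             rename Sum.inr (pPoly d (k-b-a) (Finsupp.equivFunOnFinite.symm β))) := by
  classical
  set U : MvPolynomial (Fin d ⊕ Fin d) ℝ := rename Sum.inl (∑ i : Fin d, X i ^ 2) with hUdef
  set V : MvPolynomial (Fin d ⊕ Fin d) ℝ := rename Sum.inr (∑ i : Fin d, X i ^ 2) with hVdef
  set w : MvPolynomial (Fin d ⊕ Fin d) ℝ := ∑ i : Fin d, X (Sum.inl i) * X (Sum.inr i) with hwdef
  have hU : U = ∑ i : Fin d, X (Sum.inl i) ^ 2 := by simp [hUdef]
  have hV : V = ∑ i : Fin d, X (Sum.inr i) ^ 2 := by simp [hVdef]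
  have e1 : distPoly d k = ((-2) * w + (U + V)) ^ k := by
    rw [distPoly, hU, hV, hwdef, mul_sum, ← Finset.sum_add_distrib, ← Finset.sum_add_distrib]
    congr 1
    exact Finset.sum_congr rfl fun i _ => by ring
  rw [e1, add_pow]
  refine Finset.sum_congr rfl fun b hb => ?_
  have hwb : ((-2 : MvPolynomial (Fin d ⊕ Fin d) ℝ) * w) ^ b
      = (-2)^b * ∑ β ∈ piAntidiag (univ : Finset (Fin d)) b,
          (Nat.multinomial univ β : MvPolynomial (Fin d ⊕ Fin d) ℝ)
            * (rename Sum.inl (monomial (Finsupp.equivFunOnFinite.symm β) (1:ℝ))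
               * rename Sum.inr (monomial (Finsupp.equivFunOnFinite.symm β) (1:ℝ))) := by
    rw [mul_pow, hwdef, Finset.sum_pow_eq_sum_piAntidiag]
    congr 1
    refine Finset.sum_congr rfl fun β hβ => ?_
    congr 1
    rw [monomial_one_prod, map_prod, map_prod, ← Finset.prod_mul_distrib]
    exact Finset.prod_congr rfl fun i _ => by rw [map_pow, map_pow, rename_X, rename_X, mul_pow]
  rw [add_pow, hwb]
  simp only [Finset.mul_sum, Finset.sum_mul]
  refine Finset.sum_congr rfl fun a ha => ?_
  refine Finset.sum_congr rfl fun β hβ => ?_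
  simp only [pPoly, map_mul, map_pow, smul_eq_C_mul, hUdef, hVdef]
  simp only [← C_eq_coe_nat, map_mul, map_pow, map_neg, map_ofNat]
  ring

lemma tensorApply_distPoly {d k : ℕ} (l m : Module.Dual ℝ (MvPolynomial (Fin d) ℝ)) :
    tensorApply l m (distPoly d k) =
      ∑ b ∈ range (k+1), ∑ a ∈ range (k - b + 1),
        ∑ β ∈ piAntidiag (univ : Finset (Fin d)) b,
          ((-2:ℝ)^b * (k.choose b) * ((k-b).choose a) * (Nat.multinomial univ β)) *
            (l (pPoly d a (Finsupp.equivFunOnFinite.symm β)) *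
             m (pPoly d (k-b-a) (Finsupp.equivFunOnFinite.symm β))) := by
  rw [tensorApply_eq, distPoly_expand, map_sum]
  refine Finset.sum_congr rfl fun b _ => ?_
  rw [map_sum]
  refine Finset.sum_congr rfl fun a _ => ?_
  rw [map_sum]
  refine Finset.sum_congr rfl fun β _ => ?_
  rw [map_smul, smul_eq_mul, ← tensorApply_eq, tensorApply_mul]

lemma symm_sum {d b : ℕ} {β : Fin d → ℕ} (hβ : β ∈ piAntidiag (univ : Finset (Fin d)) b) :
    ((Finsupp.equivFunOnFinite.symm β).sum fun _ e => e) = b := by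
  rw [Finsupp.sum_fintype _ _ (fun _ => rfl)]
  simpa using (mem_piAntidiag.mp hβ).1

lemma pPoly_totalDegree_le (d a : ℕ) (β : Fin d →₀ ℕ) :
    (pPoly d a β).totalDegree ≤ 2*a + β.sum fun _ e => e := by
  refine le_trans (totalDegree_mul _ _) (add_le_add ?_ ?_)
  · refine le_trans (totalDegree_pow _ _) ?_
    have h2 : (∑ i : Fin d, (X i : MvPolynomial (Fin d) ℝ) ^ 2).totalDegree ≤ 2 := by
      refine le_trans (totalDegree_finset_sum _ _) ?_
      refine Finset.sup_le fun i _ => ?_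
      rw [totalDegree_X_pow]
    calc a * (∑ i : Fin d, (X i : MvPolynomial (Fin d) ℝ) ^ 2).totalDegree
        ≤ a * 2 := Nat.mul_le_mul_left a h2
      _ = 2 * a := Nat.mul_comm a 2
  · rw [totalDegree_monomial _ (one_ne_zero : (1:ℝ) ≠ 0)]

/-- If `λ ⊥ Π_{<k}` then `(λ⊗λ)‖x−y‖^(2k) = 0` iff `λ ⊥ Π_{≤k}`. -/
theorem tensor_sq_dist_eq_zero_iff (d k : ℕ) (l : Module.Dual ℝ (MvPolynomial (Fin d) ℝ))
    (h : VanishesLT l k) :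
    tensorApply l l (distPoly d k) = 0 ↔ VanishesLE l k := by
  classical
  set F : ℕ → ℕ → (Fin d → ℕ) → ℝ := fun b a β =>
    if 2*a + b = k then
      ((2:ℝ)^b * (k.choose b) * ((k-b).choose a) * (Nat.multinomial univ β)) *
        (l (pPoly d a (Finsupp.equivFunOnFinite.symm β)))^2
    else 0 with hF
  have hFnonneg : ∀ b a β, 0 ≤ F b a β := by
    intro b a β
    rw [hF]
    dsimp only
    split
    · exact mul_nonneg (by positivity) (sq_nonneg _)
    · exact le_refl 0
  have hterm : ∀ b ∈ range (k+1), ∀ a ∈ range (k - b + 1),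
      ∀ β ∈ piAntidiag (univ : Finset (Fin d)) b,
      ((-2:ℝ)^b * (k.choose b) * ((k-b).choose a) * (Nat.multinomial univ β)) *
        (l (pPoly d a (Finsupp.equivFunOnFinite.symm β)) *
         l (pPoly d (k-b-a) (Finsupp.equivFunOnFinite.symm β)))
      = (-1:ℝ)^k * F b a β := by
    intro b hb a ha β hβ
    rw [Finset.mem_range] at hb ha
    have hβF := symm_sum hβ
    rcases lt_trichotomy (2*a + b) k with hlt | heq | hgt
    · rw [hF]; simp only [if_neg (by omega : ¬ (2*a + b = k))]
      have hz : l (pPoly d a (Finsupp.equivFunOnFinite.symm β)) = 0 := by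
        refine h _ (lt_of_le_of_lt ?_ hlt)
        simpa [hβF] using pPoly_totalDegree_le d a (Finsupp.equivFunOnFinite.symm β)
      rw [hz]; ring
    · have hca : k - b - a = a := by omega
      rw [hF]; simp only [if_pos heq, hca]
      have hk1 : (-1:ℝ)^k = (-1)^b := by
        rw [← heq, pow_add, pow_mul, neg_one_sq, one_pow, one_mul]
      have hsign : (-2:ℝ)^b = (-1)^k * 2^b := by
        rw [hk1, ← neg_one_mul, mul_pow]
      rw [hsign]; ring
    · rw [hF]; simp only [if_neg (by omega : ¬ (2*a + b = k))]
      have hz : l (pPoly d (k-b-a) (Finsupp.equivFunOnFinite.symm β)) = 0 := by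
        refine h _ (lt_of_le_of_lt ?_ (by omega : 2*(k-b-a) + b < k))
        simpa [hβF] using pPoly_totalDegree_le d (k-b-a) (Finsupp.equivFunOnFinite.symm β)
      rw [hz]; ring
  have hsum : tensorApply l l (distPoly d k)
      = (-1:ℝ)^k * ∑ b ∈ range (k+1), ∑ a ∈ range (k - b + 1),
          ∑ β ∈ piAntidiag (univ : Finset (Fin d)) b, F b a β := by
    rw [tensorApply_distPoly, Finset.mul_sum]
    refine Finset.sum_congr rfl fun b hb => ?_
    rw [Finset.mul_sum]
    refine Finset.sum_congr rfl fun a ha => ?_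
    rw [Finset.mul_sum]
    refine Finset.sum_congr rfl fun β hβ => ?_
    exact hterm b hb a ha β hβ
  constructor
  · intro h0
    -- the nonnegative sum vanishes
    have hN : ∑ b ∈ range (k+1), ∑ a ∈ range (k - b + 1),
        ∑ β ∈ piAntidiag (univ : Finset (Fin d)) b, F b a β = 0 := by
      have hne : ((-1:ℝ))^k ≠ 0 := pow_ne_zero _ (by norm_num)
      rw [hsum] at h0
      exact (mul_eq_zero.mp h0).resolve_left hne
    -- each term vanishes
    have hZ : ∀ b ∈ range (k+1), ∀ a ∈ range (k - b + 1),
        ∀ β ∈ piAntidiag (univ : Finset (Fin d)) b, F b a β = 0 := by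
      intro b hb a ha β hβ
      have h1 := (Finset.sum_eq_zero_iff_of_nonneg (fun b _ =>
        Finset.sum_nonneg fun a _ => Finset.sum_nonneg fun β _ => hFnonneg b a β)).mp hN b hb
      have h2 := (Finset.sum_eq_zero_iff_of_nonneg (fun a _ =>
        Finset.sum_nonneg fun β _ => hFnonneg b a β)).mp h1 a ha
      exact (Finset.sum_eq_zero_iff_of_nonneg (fun β _ => hFnonneg b a β)).mp h2 β hβ
    -- extract: λ kills degree-k monomials
    have key : ∀ v : Fin d →₀ ℕ, (v.sum fun _ e => e) = k → l (monomial v 1) = 0 := by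
      intro v hv
      have hmem : (⇑v : Fin d → ℕ) ∈ piAntidiag (univ : Finset (Fin d)) k := by
        rw [mem_piAntidiag]
        constructor
        · rw [← hv, Finsupp.sum_fintype _ _ (fun _ => rfl)]
        · intro i _; exact Finset.mem_univ i
      have hFk := hZ k (by simp) 0 (by simp) (⇑v) hmem
      rw [hF] at hFk
      simp only [if_pos (by omega : 2*0 + k = k)] at hFk
      have hc : ((2:ℝ)^k * (k.choose k) * ((k-k).choose 0) * (Nat.multinomial univ ⇑v)) ≠ 0 := by
        have hm : (0:ℝ) < Nat.multinomial univ ⇑v := by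
          exact_mod_cast Nat.multinomial_pos (univ : Finset (Fin d)) ⇑v
        simp only [Nat.choose_self, Nat.sub_self, Nat.choose_zero_right, Nat.cast_one, mul_one]
        positivity
      have hsq := (mul_eq_zero.mp hFk).resolve_left hc
      have hl0 : l (pPoly d 0 (Finsupp.equivFunOnFinite.symm ⇑v)) = 0 :=
        pow_eq_zero_iff (n := 2) (by norm_num) |>.mp hsq
      rwa [Finsupp.equivFunOnFinite_symm_coe, pPoly, pow_zero, one_mul] at hl0
    -- conclude VanishesLE
    intro p hp
    have hps : l p = ∑ v ∈ p.support, l (monomial v (coeff v p)) := by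
      conv_lhs => rw [p.as_sum]
      rw [map_sum]
    rw [hps]
    refine Finset.sum_eq_zero fun v hv => ?_
    have hmono : (monomial v (coeff v p) : MvPolynomial (Fin d) ℝ)
        = (coeff v p) • monomial v 1 := by
      rw [smul_monomial, smul_eq_mul, mul_one]
    rw [hmono, map_smul, smul_eq_mul]
    have hdeg : (v.sum fun _ e => e) ≤ k := le_trans (le_totalDegree hv) hp
    rcases eq_or_lt_of_le hdeg with heq | hlt
    · rw [key v heq, mul_zero]
    · have : l (monomial v 1) = 0 := by
        refine h _ ?_
        rw [totalDegree_monomial _ (one_ne_zero : (1:ℝ) ≠ 0)]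
        exact hlt
      rw [this, mul_zero]
  · intro hle
    rw [tensorApply_distPoly]
    refine Finset.sum_eq_zero fun b hb => ?_
    refine Finset.sum_eq_zero fun a ha => ?_
    refine Finset.sum_eq_zero fun β hβ => ?_
    rw [Finset.mem_range] at hb ha
    have hβF := symm_sum hβ
    by_cases hab : 2*a + b ≤ k
    · have hz : l (pPoly d a (Finsupp.equivFunOnFinite.symm β)) = 0 := by
        refine hle _ (le_trans ?_ hab)
        simpa [hβF] using pPoly_totalDegree_le d a (Finsupp.equivFunOnFinite.symm β)
      rw [hz]; ring
    · have hz : l (pPoly d (k-b-a) (Finsupp.equivFunOnFinite.symm β)) = 0 := by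
        refine h _ (lt_of_le_of_lt ?_ (by omega : 2*(k-b-a) + b < k))
        simpa [hβF] using pPoly_totalDegree_le d (k-b-a) (Finsupp.equivFunOnFinite.symm β)
      rw [hz]; ring
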